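/- Let H = ℓ²(ℕ, ℝ) with standard Hilbert basis (e_n). Let x ∈ H be the element with coordinates x(n) = 1/(n+1). Let B1 : H → H be the continuous linear map given coordinatewise by (B1 f)(n) = f(n)/(n+1)², and let B2 : H → H be given by B2 h = ⟨h, x⟩ · x. Then for every h ∈ H, if B2 h belongs to range(B1) then ⟨h, x⟩ = 0. -/

import Mathlib

/-- In `H = ℓ²(ℕ, ℝ)`, with `x(n) = 1/(n+1)`, the diagonal operator
`(B1 f)(n) = f(n)/(n+1)²` and the rank-one operator `B2 h = ⟨h, x⟩ • x`:
if `B2 h` belongs to the range of `B1`, then `⟨h, x⟩ = 0`. -/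
theorem rank_one_preimage_of_diagonal_range
    (x : lp (fun _ : ℕ => ℝ) 2)
    (hx : ∀ n : ℕ, x n = 1 / ((n : ℝ) + 1))
    (B1 : lp (fun _ : ℕ => ℝ) 2 →L[ℝ] lp (fun _ : ℕ => ℝ) 2)
    (hB1 : ∀ (f : lp (fun _ : ℕ => ℝ) 2) (n : ℕ), B1 f n = f n / ((n : ℝ) + 1) ^ 2)
    (B2 : lp (fun _ : ℕ => ℝ) 2 →L[ℝ] lp (fun _ : ℕ => ℝ) 2)
    (hB2 : ∀ h : lp (fun _ : ℕ => ℝ) 2, B2 h = (inner ℝ h x : ℝ) • x) :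
    ∀ h : lp (fun _ : ℕ => ℝ) 2, B2 h ∈ Set.range B1 → (inner ℝ h x : ℝ) = 0 := by
  intro h hmem
  obtain ⟨f, hf⟩ := hmem
  set c : ℝ := inner ℝ h x with hc
  by_contra hc0
  -- coordinatewise: f n / (n+1)^2 = c / (n+1), so f n = c * (n+1)
  have key : ∀ n : ℕ, f n = c * ((n : ℝ) + 1) := by
    intro n
    have hpos : (0 : ℝ) < (n : ℝ) + 1 := by positivity
    have h1 : f n / ((n : ℝ) + 1) ^ 2 = c * (1 / ((n : ℝ) + 1)) := by
      have := congrArg (fun g : lp (fun _ : ℕ => ℝ) 2 => g n) hf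
      simp only at this
      rw [hB1] at this
      rw [this, hB2, lp.coeFn_smul, Pi.smul_apply, hx, smul_eq_mul]
    field_simp at h1
    have h2 : ((n : ℝ) + 1) ^ 2 ≠ 0 := by positivity
    nlinarith [sq_nonneg ((n:ℝ)+1)]
  -- coordinates bounded by norm
  have hb : ∀ n : ℕ, |c| * ((n : ℝ) + 1) ≤ ‖f‖ := by
    intro n
    have := lp.norm_apply_le_norm (by norm_num : (2 : ENNReal) ≠ 0) f n
    rw [key n] at this
    calc |c| * ((n : ℝ) + 1) = ‖c * ((n : ℝ) + 1)‖ := by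
          rw [Real.norm_eq_abs, abs_mul, abs_of_pos (by positivity : (0:ℝ) < (n:ℝ)+1)]
      _ ≤ ‖f‖ := this
  obtain ⟨n, hn⟩ := exists_nat_gt (‖f‖ / |c|)
  have hcpos : 0 < |c| := abs_pos.mpr hc0
  have : ((n : ℝ)) ≤ ‖f‖ / |c| := by
    rw [le_div_iff₀ hcpos]
    nlinarith [hb n, hcpos]
  linarith
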